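/- arXiv:2505.03657 — 3 statements merged into one kernel-verified Lean document; each statement's English description precedes it below -/
import Mathlib

section
/- Let (T0, T̃0) be a joint pair of abstract Friedrichs operators on a complex Hilbert space H, let V be a subspace of the graph space W satisfying (V)-boundary conditions, let W2 ⊆ W⁻ be a closed subspace of W with W = V ∔ W2, set W1 := V ∩ W0^⊥ so that W = W0 ∔ W1 ∔ W2 with projections q0, q1, q2, and let M := D∘(q1 − q2). Then ker(D + M) = W0 + W2. -/
open scoped InnerProductSpace
open Filter Topology LinearPMap

noncomputable section

variable {H : Type*} [NormedAddCommGroup H] [InnerProductSpace ℂ H] [CompleteSpace H]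

/-- The inner product used in the paper (antilinear in the **second** entry):
`pInner x y = ⟪y, x⟫` in Mathlib's convention. -/
def pInner {H : Type*} [NormedAddCommGroup H] [InnerProductSpace ℂ H] (x y : H) : ℂ :=
  ⟪y, x⟫_ℂ

/-- A pair of densely defined operators with common domain satisfying conditions (T1) and (T2). -/
structure IsDualPairT12 (T0 T0t : H →ₗ.[ℂ] H) (lam : ℝ) : Prop where
  dom_eq : T0.domain = T0t.domain
  dense' : Dense (T0.domain : Set H)
  sym : ∀ (φ : T0.domain) (ψ : T0t.domain), pInner (T0 φ) (ψ : H) = pInner (φ : H) (T0t ψ)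
  lam_pos : 0 < lam
  bound : ∀ (x : H) (hx : x ∈ T0.domain),
    ‖T0 ⟨x, hx⟩ + T0t ⟨x, dom_eq.le hx⟩‖ ≤ 2 * lam * ‖x‖

/-- A joint pair of abstract Friedrichs operators: (T1), (T2) and (T3). -/
structure IsFriedrichsPair (T0 T0t : H →ₗ.[ℂ] H) (lam mu : ℝ)
    extends IsDualPairT12 T0 T0t lam : Prop where
  mu_pos : 0 < mu
  coercive : ∀ (x : H) (hx : x ∈ T0.domain),
    2 * mu * ‖x‖ ^ 2 ≤ (pInner (T0 ⟨x, hx⟩ + T0t ⟨x, dom_eq.le hx⟩) x).re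

/-- The boundary form `[u|v] := ⟨T₁u , v⟩ − ⟨u , T̃₁v⟩` on the graph space
`W := dom T₁ = dom (T̃₀)*`.  The hypothesis `hW` expresses the fact `dom T₁ = dom T̃₁`. -/
def bform (T0 T0t : H →ₗ.[ℂ] H) (hW : T0t.adjoint.domain = T0.adjoint.domain)
    (u v : T0t.adjoint.domain) : ℂ :=
  pInner (T0t.adjoint u) (v : H) - pInner (u : H) (T0.adjoint ⟨(v : H), hW.le v.2⟩)

/-- `X^[⊥]`, the `[·|·]`-orthogonal complement of `X ⊆ W` in the graph space. -/
def iorth (T0 T0t : H →ₗ.[ℂ] H) (hW : T0t.adjoint.domain = T0.adjoint.domain)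
    (X : Set ↥T0t.adjoint.domain) : Set ↥T0t.adjoint.domain :=
  {u | ∀ v ∈ X, bform T0 T0t hW u v = 0}

/-- `W⁺ = {u ∈ W : [u|u] ≥ 0}`. -/
def Wplus (T0 T0t : H →ₗ.[ℂ] H) (hW : T0t.adjoint.domain = T0.adjoint.domain) :
    Set ↥T0t.adjoint.domain :=
  {u | 0 ≤ (bform T0 T0t hW u u).re}

/-- `W⁻ = {u ∈ W : [u|u] ≤ 0}`. -/
def Wminus (T0 T0t : H →ₗ.[ℂ] H) (hW : T0t.adjoint.domain = T0.adjoint.domain) :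
    Set ↥T0t.adjoint.domain :=
  {u | (bform T0 T0t hW u u).re ≤ 0}

/-- (V)-boundary conditions for a subset `V` of the graph space `W`. -/
def VBC (T0 T0t : H →ₗ.[ℂ] H) (hW : T0t.adjoint.domain = T0.adjoint.domain)
    (V : Set ↥T0t.adjoint.domain) : Prop :=
  V ⊆ Wplus T0 T0t hW ∧ iorth T0 T0t hW V ⊆ Wminus T0 T0t hW ∧
    V = iorth T0 T0t hW (iorth T0 T0t hW V)

/-- The graph norm `‖u‖_{T₁} = ‖u‖ + ‖T₁ u‖` on the graph space. -/
def gnorm (T0t : H →ₗ.[ℂ] H) (u : T0t.adjoint.domain) : ℝ :=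
  ‖(u : H)‖ + ‖T0t.adjoint u‖

/-- The distance associated with the graph norm. -/
def gdist (T0t : H →ₗ.[ℂ] H) (u v : T0t.adjoint.domain) : ℝ := gnorm T0t (u - v)

/-- Closedness (sequential) in the graph-norm topology of `W`. -/
def GClosed (T0t : H →ₗ.[ℂ] H) (X : Set ↥T0t.adjoint.domain) : Prop :=
  ∀ f : ℕ → ↥T0t.adjoint.domain, (∀ n, f n ∈ X) →
    ∀ l, Tendsto (fun n => gdist T0t (f n) l) atTop (𝓝 0) → l ∈ X

/-- `W₀` (the domain of the closure of `T₀`), viewed as a subset of the graph space `W`. -/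
def W0set (T0 T0t : H →ₗ.[ℂ] H) : Set ↥T0t.adjoint.domain :=
  {u | (u : H) ∈ T0.closure.domain}

/-- The graph inner product on `W` (in the paper's convention). -/
def gip (T0t : H →ₗ.[ℂ] H) (u v : ↥T0t.adjoint.domain) : ℂ :=
  pInner (u : H) (v : H) + pInner (T0t.adjoint u) (T0t.adjoint v)

/-- The (Hilbert) orthogonal complement of `W₀` in the graph space. -/
def W0perp (T0 T0t : H →ₗ.[ℂ] H) : Set ↥T0t.adjoint.domain :=
  {u | ∀ v : ↥T0t.adjoint.domain, (v : H) ∈ T0.closure.domain → gip T0t u v = 0}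

/-- `ker T₁` as a subset of the graph space. -/
def kerT1set (T0t : H →ₗ.[ℂ] H) : Set ↥T0t.adjoint.domain := {u | T0t.adjoint u = 0}

/-- `ker T̃₁` as a subset of the graph space. -/
def kerT1tset (T0 T0t : H →ₗ.[ℂ] H) (hW : T0t.adjoint.domain = T0.adjoint.domain) :
    Set ↥T0t.adjoint.domain :=
  {u | T0.adjoint ⟨(u : H), hW.le u.2⟩ = 0}

/-- An operator `M ∈ L(W;W')`, encoded through the pairing `m u v = ⟨Mu, v⟩_{W',W}`
(linear in `u`, antilinear in `v`, and bounded with respect to the graph norm). -/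
structure MOp (T0t : H →ₗ.[ℂ] H) where
  m : ↥T0t.adjoint.domain → ↥T0t.adjoint.domain → ℂ
  add_left : ∀ u v w, m (u + v) w = m u w + m v w
  smul_left : ∀ (c : ℂ) (u w), m (c • u) w = c * m u w
  add_right : ∀ u v w, m u (v + w) = m u v + m u w
  smul_right : ∀ (c : ℂ) (u w), m u (c • w) = starRingEnd ℂ c * m u w
  bounded : ∃ C, ∀ u v, ‖m u v‖ ≤ C * (gnorm T0t u * gnorm T0t v)

/-- The (M)-boundary conditions for a pairing `m u v = ⟨Mu, v⟩_{W',W}`: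
(M1) non-negativity and (M2) `W = ker (D − M) + ker (D + M)`. -/
def MBC (T0 T0t : H →ₗ.[ℂ] H) (hW : T0t.adjoint.domain = T0.adjoint.domain)
    (m : ↥T0t.adjoint.domain → ↥T0t.adjoint.domain → ℂ) : Prop :=
  (∀ u, 0 ≤ (m u u).re) ∧
  (∀ w : ↥T0t.adjoint.domain, ∃ a b : ↥T0t.adjoint.domain,
    (∀ v, bform T0 T0t hW a v = m a v) ∧ (∀ v, bform T0 T0t hW b v + m b v = 0) ∧ w = a + b)

/-- `ker (D − M)` for a pairing `m`. -/
def kerDsubM (T0 T0t : H →ₗ.[ℂ] H) (hW : T0t.adjoint.domain = T0.adjoint.domain)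
    (m : ↥T0t.adjoint.domain → ↥T0t.adjoint.domain → ℂ) : Set ↥T0t.adjoint.domain :=
  {u | ∀ v, bform T0 T0t hW u v = m u v}

/-- `ker (D + M)` for a pairing `m`. -/
def kerDaddM (T0 T0t : H →ₗ.[ℂ] H) (hW : T0t.adjoint.domain = T0.adjoint.domain)
    (m : ↥T0t.adjoint.domain → ↥T0t.adjoint.domain → ℂ) : Set ↥T0t.adjoint.domain :=
  {u | ∀ v, bform T0 T0t hW u v + m u v = 0}

section Aux

variable {H : Type*} [NormedAddCommGroup H] [InnerProductSpace ℂ H] [CompleteSpace H]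
variable {T0 T0t : H →ₗ.[ℂ] H} {lam : ℝ}

/-- (T1) restated: `T0` and `T0t` are formal adjoints of each other. -/
theorem IsDualPairT12.isFormalAdjoint (hF : IsDualPairT12 T0 T0t lam) :
    T0.IsFormalAdjoint T0t := by
  intro x y
  have h := hF.sym x y
  unfold pInner at h
  rw [← inner_conj_symm, h, inner_conj_symm]

theorem IsDualPairT12.denseT0t (hF : IsDualPairT12 T0 T0t lam) :
    Dense (T0t.domain : Set H) := hF.dom_eq ▸ hF.dense'

theorem IsDualPairT12.le_T1 (hF : IsDualPairT12 T0 T0t lam) :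
    T0 ≤ T0t.adjoint :=
  LinearPMap.IsFormalAdjoint.le_adjoint hF.denseT0t hF.isFormalAdjoint.symm

/-- The adjoint of a densely defined operator is closed. -/
theorem adjoint_isClosed {S : H →ₗ.[ℂ] H} (hS : Dense (S.domain : Set H)) :
    S.adjoint.IsClosed := by
  have hset : (S.adjoint.graph : Set (H × H)) =
      ⋂ ψ : S.domain, {p : H × H | ⟪p.2, (ψ : H)⟫_ℂ = ⟪p.1, S ψ⟫_ℂ} := by
    ext p
    simp only [Set.mem_iInter, SetLike.mem_coe, LinearPMap.mem_graph_iff, Set.mem_setOf_eq]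
    constructor
    · rintro ⟨y, hy1, hy2⟩ ψ
      rw [← hy2, ← hy1]
      exact LinearPMap.adjoint_isFormalAdjoint hS y ψ
    · intro hp
      have hmem : p.1 ∈ S.adjoint.domain :=
        LinearPMap.mem_adjoint_domain_of_exists _ ⟨p.2, fun ψ => hp ψ⟩
      exact ⟨⟨p.1, hmem⟩, rfl, LinearPMap.adjoint_apply_eq hS _ fun ψ => hp ψ⟩
  rw [LinearPMap.IsClosed, hset]
  exact isClosed_iInter fun ψ =>
    isClosed_eq (Continuous.inner continuous_snd continuous_const)
      (Continuous.inner continuous_fst continuous_const)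

theorem IsDualPairT12.T1_isClosed (hF : IsDualPairT12 T0 T0t lam) :
    T0t.adjoint.IsClosed := _root_.adjoint_isClosed hF.denseT0t

theorem IsDualPairT12.isClosableT0 (hF : IsDualPairT12 T0 T0t lam) :
    T0.IsClosable := hF.T1_isClosed.isClosable.leIsClosable hF.le_T1

theorem IsDualPairT12.closure_le_T1 (hF : IsDualPairT12 T0 T0t lam) :
    T0.closure ≤ T0t.adjoint := by
  have h1 : T0t.adjoint.closure = T0t.adjoint := by
    apply LinearPMap.eq_of_eq_graph
    rw [← hF.T1_isClosed.isClosable.graph_closure_eq_closure_graph]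
    exact SetLike.ext' (by rw [Submodule.topologicalClosure_coe, hF.T1_isClosed.closure_eq])
  exact h1 ▸ hF.T1_isClosed.isClosable.closure_mono hF.le_T1

variable (hW : T0t.adjoint.domain = T0.adjoint.domain)

/-- Elements of `W₀` are `[·|·]`-orthogonal to everything: the easy half of `W₀ = W^[⊥]`. -/
theorem bform_eq_zero_of_mem_W0set (hF : IsDualPairT12 T0 T0t lam)
    {a : ↥T0t.adjoint.domain} (ha : a ∈ W0set T0 T0t) (v : ↥T0t.adjoint.domain) :
    bform T0 T0t hW a v = 0 := by
  set a' : ↥T0.closure.domain := ⟨(a : H), ha⟩ with ha'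
  have hTa : T0.closure a' = T0t.adjoint a := hF.closure_le_T1.2 rfl
  have hgmem : ((a : H), T0.closure a') ∈ (T0.graph.topologicalClosure : Set (H × H)) := by
    rw [hF.isClosableT0.graph_closure_eq_closure_graph]
    exact T0.closure.mem_graph a'
  rw [Submodule.topologicalClosure_coe] at hgmem
  set s : Set (H × H) :=
    {p : H × H | ⟪(T0.adjoint ⟨(v : H), hW.le v.2⟩ : H), p.1⟫_ℂ = ⟪(v : H), p.2⟫_ℂ} with hs
  have hclosed : IsClosed s :=
    isClosed_eq (Continuous.inner continuous_const continuous_fst)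
      (Continuous.inner continuous_const continuous_snd)
  have hsub : (T0.graph : Set (H × H)) ⊆ s := by
    rintro p hp
    rw [SetLike.mem_coe, LinearPMap.mem_graph_iff] at hp
    obtain ⟨y, hy1, hy2⟩ := hp
    rw [hs, Set.mem_setOf_eq, ← hy1, ← hy2]
    exact LinearPMap.adjoint_isFormalAdjoint hF.dense' ⟨(v : H), hW.le v.2⟩ y
  have hmem : ((a : H), T0.closure a') ∈ s := closure_minimal hsub hclosed hgmem
  rw [hs, Set.mem_setOf_eq] at hmem
  unfold bform pInner
  rw [← hTa, ← hmem, sub_self]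

/-- The hard half of `W₀ = W^[⊥]`: if `[w|v] = 0` for every `v ∈ W`, then `w ∈ W₀`. -/
theorem mem_W0set_of_bform_eq_zero (hF : IsDualPairT12 T0 T0t lam)
    {w : ↥T0t.adjoint.domain} (hw : ∀ v, bform T0 T0t hW w v = 0) :
    w ∈ W0set T0 T0t := by
  set z : H := T0t.adjoint w with hz
  set G : Submodule ℂ (WithLp 2 (H × H)) :=
    T0.graph.comap (WithLp.linearEquiv 2 ℂ (H × H)).toLinearMap with hG
  set x : WithLp 2 (H × H) := (WithLp.linearEquiv 2 ℂ (H × H)).symm ((w : H), z) with hx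
  have hxmem : x ∈ Gᗮᗮ := by
    rw [Submodule.mem_orthogonal]
    intro p hp
    rw [Submodule.mem_orthogonal] at hp
    have hab : ∀ φ : T0.domain, ⟪(φ : H), p.ofLp.1⟫_ℂ + ⟪(T0 φ : H), p.ofLp.2⟫_ℂ = 0 := by
      intro φ
      have hmemG : ((WithLp.linearEquiv 2 ℂ (H × H)).symm ((φ : H), T0 φ)) ∈ G := by
        rw [hG, Submodule.mem_comap]
        exact T0.mem_graph φ
      have := hp _ hmemG
      rwa [WithLp.prod_inner_apply] at this
    have hinner : ∀ φ : T0.domain, ⟪-p.ofLp.1, (φ : H)⟫_ℂ = ⟪p.ofLp.2, (T0 φ : H)⟫_ℂ := by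
      intro φ
      have h1 := congrArg (starRingEnd ℂ) (hab φ)
      simp only [_root_.map_add, _root_.map_zero, inner_conj_symm] at h1
      rw [inner_neg_left]
      linear_combination -h1
    have hbdom : p.ofLp.2 ∈ T0.adjoint.domain :=
      LinearPMap.mem_adjoint_domain_of_exists _ ⟨-p.ofLp.1, fun φ => hinner φ⟩
    have hadj : T0.adjoint ⟨p.ofLp.2, hbdom⟩ = -p.ofLp.1 :=
      LinearPMap.adjoint_apply_eq hF.dense' _ fun φ => hinner φ
    have hbf := hw ⟨p.ofLp.2, hW.ge hbdom⟩
    unfold bform pInner at hbf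
    have hcast : T0.adjoint ⟨((⟨p.ofLp.2, hW.ge hbdom⟩ : ↥T0t.adjoint.domain) : H),
        hW.le (hW.ge hbdom)⟩ = -p.ofLp.1 := hadj
    rw [hcast, inner_neg_left] at hbf
    rw [WithLp.prod_inner_apply]
    show ⟪p.ofLp.1, (w : H)⟫_ℂ + ⟪p.ofLp.2, z⟫_ℂ = 0
    linear_combination hbf
  rw [Submodule.orthogonal_orthogonal_eq_closure] at hxmem
  have hxcl : x ∈ closure (G : Set (WithLp 2 (H × H))) := by
    rw [← Submodule.topologicalClosure_coe]; exact hxmem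
  have hGset : (G : Set (WithLp 2 (H × H))) =
      ((WithLp.prodContinuousLinearEquiv 2 ℂ H H).toHomeomorph) ⁻¹' (T0.graph : Set (H × H)) := rfl
  rw [hGset, ← Homeomorph.preimage_closure] at hxcl
  have hwz : ((w : H), z) ∈ closure (T0.graph : Set (H × H)) := hxcl
  have hmem2 : ((w : H), z) ∈ T0.closure.graph := by
    rw [← hF.isClosableT0.graph_closure_eq_closure_graph]
    show ((w : H), z) ∈ (T0.graph.topologicalClosure : Set (H × H))
    rw [Submodule.topologicalClosure_coe]
    exact hwz
  rw [LinearPMap.mem_graph_iff] at hmem2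
  obtain ⟨y, hy1, -⟩ := hmem2
  show (w : H) ∈ T0.closure.domain
  have hy1' : (y : H) = (w : H) := hy1
  exact hy1' ▸ y.2

theorem bform_add_left (u u' v : ↥T0t.adjoint.domain) :
    bform T0 T0t hW (u + u') v = bform T0 T0t hW u v + bform T0 T0t hW u' v := by
  unfold bform pInner
  rw [LinearPMap.map_add, Submodule.coe_add, inner_add_right, inner_add_right]
  ring

theorem bform_sub_left (u u' v : ↥T0t.adjoint.domain) :
    bform T0 T0t hW (u - u') v = bform T0 T0t hW u v - bform T0 T0t hW u' v := by
  unfold bform pInner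
  rw [LinearPMap.map_sub, Submodule.coe_sub, inner_sub_right, inner_sub_right]
  ring

theorem bform_zero_left (v : ↥T0t.adjoint.domain) :
    bform T0 T0t hW (0 : ↥T0t.adjoint.domain) v = 0 := by
  unfold bform pInner
  rw [LinearPMap.map_zero, Submodule.coe_zero, inner_zero_right, inner_zero_right, sub_self]

theorem eq_zero_of_gip_self_eq_zero {u : ↥T0t.adjoint.domain}
    (h : gip T0t u u = 0) : u = 0 := by
  unfold gip pInner at h
  rw [inner_self_eq_norm_sq_to_K, inner_self_eq_norm_sq_to_K] at h
  have h2 : ((‖(u : H)‖ ^ 2 + ‖T0t.adjoint u‖ ^ 2 : ℝ) : ℂ) = 0 := by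
    push_cast
    exact h
  rw [Complex.ofReal_eq_zero] at h2
  have h3 : ‖(u : H)‖ = 0 := by
    nlinarith [norm_nonneg (u : H), norm_nonneg (T0t.adjoint u)]
  exact Subtype.ext (norm_eq_zero.mp h3)

theorem eq_zero_of_mem_W0set_mem_W0perp {u : ↥T0t.adjoint.domain}
    (hmem : u ∈ W0set T0 T0t) (hperp : u ∈ W0perp T0 T0t) : u = 0 :=
  eq_zero_of_gip_self_eq_zero (hperp u hmem)

theorem mem_V_of_mem_W0set (hF : IsDualPairT12 T0 T0t lam)
    {V : Submodule ℂ ↥T0t.adjoint.domain} (hV : VBC T0 T0t hW (V : Set _))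
    {a : ↥T0t.adjoint.domain} (ha : a ∈ W0set T0 T0t) : a ∈ V := by
  have hmem : a ∈ iorth T0 T0t hW (iorth T0 T0t hW (V : Set _)) :=
    fun v _ => bform_eq_zero_of_mem_W0set hW hF ha v
  rw [← hV.2.2] at hmem
  exact hmem

end Aux


/-- Remark 5.4(i): with `M = D(q₁ − q₂)` constructed from a decomposition
`W = W₀ ∔ (V ∩ W₀^⊥) ∔ W₂` as in Theorem 5.1(i), one has `ker (D + M) = W₀ + W₂`. -/
theorem kerDaddM_eq_W0_add_W2
    (T0 T0t : H →ₗ.[ℂ] H) (lam mu : ℝ) (hF : IsFriedrichsPair T0 T0t lam mu)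
    (hW : T0t.adjoint.domain = T0.adjoint.domain)
    (V : Submodule ℂ ↥T0t.adjoint.domain) (hV : VBC T0 T0t hW (V : Set _))
    (W2 : Submodule ℂ ↥T0t.adjoint.domain)
    (hW2closed : GClosed T0t (W2 : Set _)) (hW2neg : (W2 : Set _) ⊆ Wminus T0 T0t hW)
    (hdisj : V ⊓ W2 = ⊥) (hspan : V ⊔ W2 = ⊤)
    (q0 q1 q2 : ↥T0t.adjoint.domain →ₗ[ℂ] ↥T0t.adjoint.domain)
    (hq : ∀ u, q0 u ∈ W0set T0 T0t ∧ q1 u ∈ (V : Set _) ∩ W0perp T0 T0t ∧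
      q2 u ∈ W2 ∧ q0 u + q1 u + q2 u = u) :
    kerDaddM T0 T0t hW (fun u v => bform T0 T0t hW (q1 u - q2 u) v) =
      {u : ↥T0t.adjoint.domain | ∃ a ∈ W0set T0 T0t, ∃ b ∈ (W2 : Set _), u = a + b} := by
  have hD := hF.toIsDualPairT12
  ext u
  simp only [kerDaddM, Set.mem_setOf_eq]
  constructor
  · intro hker
    obtain ⟨h0, h1, h2, hsum⟩ := hq u
    have hb1 : ∀ v, bform T0 T0t hW (q1 u) v = 0 := by
      intro v
      have hk := hker v
      have e1 : bform T0 T0t hW u v =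
          bform T0 T0t hW (q1 u) v + bform T0 T0t hW (q2 u) v := by
        conv_lhs => rw [← hsum]
        rw [bform_add_left, bform_add_left, bform_eq_zero_of_mem_W0set hW hD h0, zero_add]
      rw [e1, bform_sub_left] at hk
      have h2' : bform T0 T0t hW (q1 u) v + bform T0 T0t hW (q1 u) v = 0 := by
        linear_combination hk
      exact add_self_eq_zero.mp h2'
    have hm : q1 u ∈ W0set T0 T0t := mem_W0set_of_bform_eq_zero hW hD hb1
    have hz : q1 u = 0 := eq_zero_of_mem_W0set_mem_W0perp hm h1.2
    refine ⟨q0 u, h0, q2 u, h2, ?_⟩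
    have h := hsum.symm
    rw [hz, add_zero] at h
    exact h
  · rintro ⟨a, ha, b, hb, rfl⟩
    obtain ⟨h0, h1, h2, hsum⟩ := hq (a + b)
    set s := q0 (a + b) with hs
    set t := q1 (a + b) with ht
    set r := q2 (a + b) with hr
    have key : t = (a - s) + (b - r) := by
      calc t = s + t + r - s - r := by abel
        _ = a + b - s - r := by rw [hsum]
        _ = (a - s) + (b - r) := by abel
    have hw0 : a - s ∈ W0set T0 T0t := by
      show ((a - s : ↥T0t.adjoint.domain) : H) ∈ T0.closure.domain
      push_cast
      exact sub_mem ha h0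
    have hw2 : b - r ∈ W2 := W2.sub_mem hb h2
    have haV : a - s ∈ V := mem_V_of_mem_W0set hW hD hV hw0
    have hbrV : b - r ∈ V := by
      have hh : b - r = t - (a - s) := by rw [key]; abel
      rw [hh]; exact V.sub_mem h1.1 haV
    have hbr0 : b - r = 0 := by
      have hmem : b - r ∈ V ⊓ W2 := ⟨hbrV, hw2⟩
      rw [hdisj] at hmem
      exact hmem
    have ht0 : t = 0 := by
      have htW0 : t ∈ W0set T0 T0t := by rw [key, hbr0, add_zero]; exact hw0
      exact eq_zero_of_mem_W0set_mem_W0perp htW0 h1.2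
    have hrb : r = b := by rw [sub_eq_zero] at hbr0; exact hbr0.symm
    intro v
    rw [bform_add_left, bform_eq_zero_of_mem_W0set hW hD ha v, bform_sub_left, ht0,
      bform_zero_left, hrb]
    ring
end
end

section
/- A pair (T0, T̃0) of densely defined linear operators with common domain D on a complex Hilbert space H is a joint pair of abstract Friedrichs operators if and only if there exist a densely defined skew-symmetric linear operator L0 with dom L0 = D (i.e. ⟨L0 φ, ψ⟩ = −⟨φ, L0 ψ⟩ for all φ, ψ ∈ D) and a bounded self-adjoint operator S on H with strictly positive bottom (i.e. ⟨S u, u⟩ ≥ c‖u‖² for some c > 0 and all u ∈ H) such that T0 = L0 + S and T̃0 = −L0 + S. In that case the decomposition is unique, S = ½ · (the closure of T0 + T̃0), and with the constants λ, μ from (T2), (T3) one has ‖S u‖ ≤ λ‖u‖ and ⟨S u, u⟩ ≥ μ‖u‖² for all u ∈ H. -/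
open scoped InnerProductSpace
open Filter Topology LinearPMap

noncomputable section

variable {H : Type*} [NormedAddCommGroup H] [InnerProductSpace ℂ H] [CompleteSpace H]

section FriedrichsHelpers

private lemma dense_mem_of_isClosed {s P : Set H} (hs : Dense s) (hP : IsClosed P)
    (h : s ⊆ P) (u : H) : u ∈ P :=
  hP.closure_subset_iff.mpr h (hs u)

private lemma double_of_half {E : Type*} [AddCommGroup E] [Module ℂ E] {a w : E}
    (h : a = (2:ℂ)⁻¹ • w) : w = a + a := by
  rw [h, ← two_smul ℂ ((2:ℂ)⁻¹ • w), smul_smul, mul_inv_cancel₀ (two_ne_zero), one_smul]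

private lemma sum_eq_double (T0 T0t : H →ₗ.[ℂ] H) (hdom : T0.domain = T0t.domain)
    (L0 : H →ₗ.[ℂ] H) (S : H →L[ℂ] H) (hL : L0.domain = T0.domain)
    (hdec : ∀ (x : H) (hx : x ∈ T0.domain),
        T0 ⟨x, hx⟩ = L0 ⟨x, hL.ge hx⟩ + S x ∧
        T0t ⟨x, hdom.le hx⟩ = -L0 ⟨x, hL.ge hx⟩ + S x)
    (x : H) (hx : x ∈ T0.domain) :
    T0 ⟨x, hx⟩ + T0t ⟨x, hdom.le hx⟩ = S x + S x := by
  rw [(hdec x hx).1, (hdec x hx).2]; abel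

private lemma exists_S (T0 T0t : H →ₗ.[ℂ] H) (hdom : T0.domain = T0t.domain)
    (hdense : Dense (T0.domain : Set H)) (lam : ℝ)
    (hb : ∀ (x : H) (hx : x ∈ T0.domain),
        ‖T0 ⟨x, hx⟩ + T0t ⟨x, hdom.le hx⟩‖ ≤ 2 * lam * ‖x‖) :
    ∃ S : H →L[ℂ] H, ∀ (x : H) (hx : x ∈ T0.domain),
      S x = (2:ℂ)⁻¹ • (T0 ⟨x, hx⟩ + T0t ⟨x, hdom.le hx⟩) := by
  set g : T0.domain →ₗ[ℂ] H :=
    (2:ℂ)⁻¹ • (T0.toFun + T0t.toFun ∘ₗ Submodule.inclusion hdom.le) with hgdef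
  have hg : ∀ φ : T0.domain,
      g φ = (2:ℂ)⁻¹ • (T0 φ + T0t ⟨(φ : H), hdom.le φ.2⟩) := fun φ => rfl
  have hgb : ∀ φ : T0.domain, ‖g φ‖ ≤ lam * ‖φ‖ := by
    intro φ
    rw [hg, norm_smul]
    have h1 := hb (φ : H) φ.2
    have h2 : ‖((2:ℂ)⁻¹)‖ = 2⁻¹ := by norm_num
    have h3 : ‖φ‖ = ‖(φ : H)‖ := rfl
    have h4 : T0 ⟨(φ : H), φ.2⟩ = T0 φ := rfl
    rw [h2, h3]
    rw [h4] at h1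
    nlinarith [norm_nonneg (T0 φ + T0t ⟨(φ : H), hdom.le φ.2⟩)]
  set gc : T0.domain →L[ℂ] H := g.mkContinuous lam hgb with hgc
  have hdr : DenseRange ⇑(T0.domain.subtypeL) := hdense.denseRange_val
  have hui : IsUniformInducing ⇑(T0.domain.subtypeL) :=
    isUniformEmbedding_subtype_val.isUniformInducing
  refine ⟨gc.extend T0.domain.subtypeL, fun x hx => ?_⟩
  have h0 := ContinuousLinearMap.extend_eq gc hdr hui ⟨x, hx⟩
  have h1 : gc (⟨x, hx⟩ : T0.domain) = g ⟨x, hx⟩ := rfl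
  have h2 : (T0.domain.subtypeL) (⟨x, hx⟩ : T0.domain) = x := rfl
  rw [h2, h1, hg] at h0
  exact h0

end FriedrichsHelpers

/-- Theorem 2.8: `(T₀, T̃₀)` is a joint pair of abstract Friedrichs operators iff
`T₀ = L₀ + S` and `T̃₀ = −L₀ + S` for a skew-symmetric `L₀` (with domain `D`) and a
bounded self-adjoint `S` with strictly positive bottom; the decomposition is unique,
`S = ½ (closure of T₀ + T̃₀)` (i.e. `S` extends `½(T₀ + T̃₀)` continuously), and
`‖S u‖ ≤ λ‖u‖`, `⟨S u, u⟩ ≥ μ‖u‖²` with the constants from (T2), (T3). -/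

theorem friedrichs_iff_skew_add_selfadjoint
    (T0 T0t : H →ₗ.[ℂ] H)
    (hdom : T0.domain = T0t.domain) (hdense : Dense (T0.domain : Set H)) :
    (((∀ (φ : T0.domain) (ψ : T0t.domain),
          pInner (T0 φ) (ψ : H) = pInner (φ : H) (T0t ψ)) ∧
      (∃ lam > (0 : ℝ), ∀ (x : H) (hx : x ∈ T0.domain),
          ‖T0 ⟨x, hx⟩ + T0t ⟨x, hdom.le hx⟩‖ ≤ 2 * lam * ‖x‖) ∧
      (∃ mu > (0 : ℝ), ∀ (x : H) (hx : x ∈ T0.domain),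
          2 * mu * ‖x‖ ^ 2 ≤ (pInner (T0 ⟨x, hx⟩ + T0t ⟨x, hdom.le hx⟩) x).re)) ↔
     (∃ (L0 : H →ₗ.[ℂ] H) (S : H →L[ℂ] H) (hL : L0.domain = T0.domain),
        (∀ (φ ψ : L0.domain), pInner (L0 φ) (ψ : H) = -pInner (φ : H) (L0 ψ)) ∧
        (∀ u v : H, pInner (S u) v = pInner u (S v)) ∧
        (∃ c > (0 : ℝ), ∀ u : H, c * ‖u‖ ^ 2 ≤ (pInner (S u) u).re) ∧
        (∀ (x : H) (hx : x ∈ T0.domain),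
          T0 ⟨x, hx⟩ = L0 ⟨x, hL.ge hx⟩ + S x ∧
          T0t ⟨x, hdom.le hx⟩ = -L0 ⟨x, hL.ge hx⟩ + S x))) ∧
    (∀ (L0 L0' : H →ₗ.[ℂ] H) (S S' : H →L[ℂ] H)
        (hL : L0.domain = T0.domain) (hL' : L0'.domain = T0.domain),
      (∀ (φ ψ : L0.domain), pInner (L0 φ) (ψ : H) = -pInner (φ : H) (L0 ψ)) →
      (∀ u v : H, pInner (S u) v = pInner u (S v)) →
      (∃ c > (0 : ℝ), ∀ u : H, c * ‖u‖ ^ 2 ≤ (pInner (S u) u).re) →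
      (∀ (x : H) (hx : x ∈ T0.domain),
        T0 ⟨x, hx⟩ = L0 ⟨x, hL.ge hx⟩ + S x ∧
        T0t ⟨x, hdom.le hx⟩ = -L0 ⟨x, hL.ge hx⟩ + S x) →
      (∀ (φ ψ : L0'.domain), pInner (L0' φ) (ψ : H) = -pInner (φ : H) (L0' ψ)) →
      (∀ u v : H, pInner (S' u) v = pInner u (S' v)) →
      (∃ c > (0 : ℝ), ∀ u : H, c * ‖u‖ ^ 2 ≤ (pInner (S' u) u).re) →
      (∀ (x : H) (hx : x ∈ T0.domain),
        T0 ⟨x, hx⟩ = L0' ⟨x, hL'.ge hx⟩ + S' x ∧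
        T0t ⟨x, hdom.le hx⟩ = -L0' ⟨x, hL'.ge hx⟩ + S' x) →
      L0 = L0' ∧ S = S') ∧
    (∀ (L0 : H →ₗ.[ℂ] H) (S : H →L[ℂ] H) (hL : L0.domain = T0.domain),
      (∀ (φ ψ : L0.domain), pInner (L0 φ) (ψ : H) = -pInner (φ : H) (L0 ψ)) →
      (∀ u v : H, pInner (S u) v = pInner u (S v)) →
      (∃ c > (0 : ℝ), ∀ u : H, c * ‖u‖ ^ 2 ≤ (pInner (S u) u).re) →
      (∀ (x : H) (hx : x ∈ T0.domain),
        T0 ⟨x, hx⟩ = L0 ⟨x, hL.ge hx⟩ + S x ∧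
        T0t ⟨x, hdom.le hx⟩ = -L0 ⟨x, hL.ge hx⟩ + S x) →
      (∀ (x : H) (hx : x ∈ T0.domain),
        S x = (2 : ℂ)⁻¹ • (T0 ⟨x, hx⟩ + T0t ⟨x, hdom.le hx⟩)) ∧
      (∀ lam : ℝ, (∀ (x : H) (hx : x ∈ T0.domain),
          ‖T0 ⟨x, hx⟩ + T0t ⟨x, hdom.le hx⟩‖ ≤ 2 * lam * ‖x‖) →
        ∀ u : H, ‖S u‖ ≤ lam * ‖u‖) ∧
      (∀ mu : ℝ, (∀ (x : H) (hx : x ∈ T0.domain),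
          2 * mu * ‖x‖ ^ 2 ≤ (pInner (T0 ⟨x, hx⟩ + T0t ⟨x, hdom.le hx⟩) x).re) →
        ∀ u : H, mu * ‖u‖ ^ 2 ≤ (pInner (S u) u).re)) := by
  have hdenseSet : Dense ((T0.domain : Set H)) := hdense
  refine ⟨?_, ?_, ?_⟩
  · -- part 1: the iff
    constructor
    · rintro ⟨h1, ⟨lam, hlam, hb⟩, ⟨mu, hmu, hc⟩⟩
      obtain ⟨S, hS⟩ := exists_S T0 T0t hdom hdense lam hb
      -- symmetry of S on the dense domain
      have hsymD : ∀ (u v : H) (hu : u ∈ T0.domain) (hv : v ∈ T0.domain),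
          pInner (S u) v = pInner u (S v) := by
        intro u v hu hv
        have e1 : S u = (2:ℂ)⁻¹ • (T0 ⟨u, hu⟩ + T0t ⟨u, hdom.le hu⟩) := hS u hu
        have e2 : S v = (2:ℂ)⁻¹ • (T0 ⟨v, hv⟩ + T0t ⟨v, hdom.le hv⟩) := hS v hv
        have t1 : ⟪v, (T0 ⟨u, hu⟩ : H)⟫_ℂ = ⟪(T0t ⟨v, hdom.le hv⟩ : H), u⟫_ℂ :=
          h1 ⟨u, hu⟩ ⟨v, hdom.le hv⟩
        have t2 : ⟪u, (T0 ⟨v, hv⟩ : H)⟫_ℂ = ⟪(T0t ⟨u, hdom.le hu⟩ : H), v⟫_ℂ :=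
          h1 ⟨v, hv⟩ ⟨u, hdom.le hu⟩
        have t2' : ⟪v, (T0t ⟨u, hdom.le hu⟩ : H)⟫_ℂ = ⟪(T0 ⟨v, hv⟩ : H), u⟫_ℂ := by
          have := congrArg (starRingEnd ℂ) t2
          simpa [inner_conj_symm] using this.symm
        simp only [pInner, e1, e2, inner_smul_right, inner_smul_left, inner_add_right,
          inner_add_left, map_inv₀, Complex.conj_ofNat]
        rw [t1, t2']
        ring
      have hSsym : ∀ u v : H, pInner (S u) v = pInner u (S v) := by
        have step1 : ∀ (u : H) (hu : u ∈ T0.domain) (v : H),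
            pInner (S u) v = pInner u (S v) := by
          intro u hu
          have hclosed : IsClosed {v : H | pInner (S u) v = pInner u (S v)} := by
            apply isClosed_eq
            · exact Continuous.inner continuous_id continuous_const
            · exact Continuous.inner S.continuous continuous_const
          exact fun v => dense_mem_of_isClosed hdenseSet hclosed
            (fun v hv => hsymD u v hu hv) v
        intro u v
        have hclosed : IsClosed {w : H | pInner (S w) v = pInner w (S v)} := by
          apply isClosed_eq
          · exact Continuous.inner continuous_const S.continuous
          · exact Continuous.inner continuous_const continuous_id
        exact dense_mem_of_isClosed hdenseSet hclosed
          (fun w hw => step1 w hw v) u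
      -- coercivity of S
      have hcoerS : ∀ u : H, mu * ‖u‖ ^ 2 ≤ (pInner (S u) u).re := by
        have hclosed : IsClosed {u : H | mu * ‖u‖ ^ 2 ≤ (pInner (S u) u).re} := by
          apply isClosed_le
          · exact continuous_const.mul (continuous_norm.pow 2)
          · exact Complex.continuous_re.comp (Continuous.inner continuous_id S.continuous)
        intro u
        refine dense_mem_of_isClosed hdenseSet hclosed (fun x hx => ?_) u
        have h1 := hc x hx
        rw [double_of_half (hS x hx)] at h1
        simp only [Set.mem_setOf_eq, pInner, inner_add_right, Complex.add_re] at h1 ⊢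
        linarith
      refine ⟨⟨T0.domain, T0.toFun - (S : H →ₗ[ℂ] H) ∘ₗ T0.domain.subtype⟩, S, rfl,
        ?_, hSsym, ⟨mu, hmu, hcoerS⟩, ?_⟩
      · intro φ ψ
        have t1 : ⟪(ψ : H), (T0 φ : H)⟫_ℂ = ⟪(T0t ⟨(ψ : H), hdom.le ψ.2⟩ : H), (φ : H)⟫_ℂ :=
          h1 φ ⟨(ψ : H), hdom.le ψ.2⟩
        have hsum := double_of_half (hS (ψ : H) ψ.2)
        have t3 : (T0t ⟨(ψ : H), hdom.le ψ.2⟩ : H)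
            = S (ψ : H) + S (ψ : H) - T0 ⟨(ψ : H), ψ.2⟩ := by
          rw [← hsum]; abel
        have sy : ⟪(ψ : H), S (φ : H)⟫_ℂ = ⟪S (ψ : H), (φ : H)⟫_ℂ :=
          hSsym (φ : H) (ψ : H)
        have hT0φ : T0.toFun φ = T0 φ := rfl
        have hT0ψ : T0.toFun ψ = T0 ⟨(ψ : H), ψ.2⟩ := rfl
        simp only [pInner, LinearPMap.mk_apply, LinearMap.sub_apply, LinearMap.coe_comp,
          Function.comp_apply, Submodule.coe_subtype, ContinuousLinearMap.coe_coe,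
          hT0φ, hT0ψ, inner_sub_right, inner_sub_left]
        rw [t1, t3, sy]
        simp only [inner_sub_left, inner_add_left]
        ring
      · intro x hx
        have h2 := double_of_half (hS x hx)
        constructor
        · have : T0 ⟨x, hx⟩ = (T0 ⟨x, hx⟩ - S x) + S x := by abel
          exact this
        · have h3 : T0t ⟨x, hdom.le hx⟩ = S x + S x - T0 ⟨x, hx⟩ := by
            rw [← h2]; abel
          have : T0t ⟨x, hdom.le hx⟩ = -(T0 ⟨x, hx⟩ - S x) + S x := by
            rw [h3]; abel
          exact this
    · rintro ⟨L0, S, hL, hskew, hsym, ⟨c, hc, hcoer⟩, hdec⟩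
      have hsum := sum_eq_double T0 T0t hdom L0 S hL hdec
      refine ⟨?_, ⟨‖S‖ + 1, by positivity, ?_⟩, ⟨c, hc, ?_⟩⟩
      · intro φ ψ
        have hψ : (ψ : H) ∈ T0.domain := hdom.ge ψ.2
        have d1 := (hdec (φ : H) φ.2).1
        have d2 := (hdec (ψ : H) hψ).2
        have hφ' : T0 ⟨(φ : H), φ.2⟩ = T0 φ := rfl
        have hψ' : T0t ⟨(ψ : H), hdom.le hψ⟩ = T0t ψ := rfl
        rw [hφ'] at d1
        rw [hψ'] at d2
        have sk := hskew ⟨(φ : H), hL.ge φ.2⟩ ⟨(ψ : H), hL.ge hψ⟩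
        have sy := hsym (φ : H) (ψ : H)
        simp only [pInner] at sk sy ⊢
        rw [d1, d2]
        simp only [inner_add_right, inner_add_left, inner_neg_left, inner_neg_right]
        rw [sk, sy]
      · intro x hx
        rw [hsum x hx]
        have h1 := S.le_opNorm x
        have h2 : ‖S x + S x‖ ≤ 2 * ‖S x‖ := by
          calc ‖S x + S x‖ ≤ ‖S x‖ + ‖S x‖ := norm_add_le _ _
          _ = 2 * ‖S x‖ := by ring
        nlinarith [norm_nonneg x, norm_nonneg (S x)]
      · intro x hx
        rw [hsum x hx]
        have h1 := hcoer x
        simp only [pInner, inner_add_right, Complex.add_re] at h1 ⊢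
        nlinarith
  · -- part 2: uniqueness
    intro L0 L0' S S' hL hL' hskew hsym hpos hdec hskew' hsym' hpos' hdec'
    have hsum := sum_eq_double T0 T0t hdom L0 S hL hdec
    have hsum' := sum_eq_double T0 T0t hdom L0' S' hL' hdec'
    have hSS' : S = S' := by
      refine ContinuousLinearMap.ext fun u => ?_
      have hclosed : IsClosed {u : H | S u = S' u} :=
        isClosed_eq S.continuous S'.continuous
      refine dense_mem_of_isClosed hdenseSet hclosed (fun x hx => ?_) u
      have h1 := hsum x hx
      have h2 := hsum' x hx
      rw [h1] at h2
      have : (2:ℂ) • S x = (2:ℂ) • S' x := by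
        rw [two_smul, two_smul]; exact h2
      have := congrArg (fun w => (2:ℂ)⁻¹ • w) this
      simpa [smul_smul, inv_mul_cancel₀ (two_ne_zero (α := ℂ))] using this
    refine ⟨?_, hSS'⟩
    refine LinearPMap.ext (hL.trans hL'.symm) ?_
    intro z hzx hzy
    set x : L0.domain := ⟨z, hzx⟩ with hxdef
    set y : L0'.domain := ⟨z, hzy⟩ with hydef
    have hxy : (x : H) = y := rfl
    have hx1 : (x : H) ∈ T0.domain := hL.le x.2
    have hy1 : (y : H) ∈ T0.domain := hL'.le y.2
    have d1 := (hdec (x : H) hx1).1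
    have d1' := (hdec' (y : H) hy1).1
    have hx2 : L0 ⟨(x : H), hL.ge hx1⟩ = L0 x := rfl
    have hy2 : L0' ⟨(y : H), hL'.ge hy1⟩ = L0' y := rfl
    rw [hx2] at d1
    rw [hy2] at d1'
    have hT : T0 ⟨(x : H), hx1⟩ = T0 ⟨(y : H), hy1⟩ := by
      congr 1
    have : L0 x + S (x : H) = L0' y + S' (y : H) := by
      rw [← d1, ← d1', hT]
    rw [hSS', hxy] at this
    exact add_right_cancel this
  · -- part 3
    intro L0 S hL hskew hsym hpos hdec
    have hsum := sum_eq_double T0 T0t hdom L0 S hL hdec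
    refine ⟨?_, ?_, ?_⟩
    · intro x hx
      rw [hsum x hx, ← two_smul ℂ (S x), smul_smul, inv_mul_cancel₀ (two_ne_zero), one_smul]
    · intro lam hb u
      have hclosed : IsClosed {u : H | ‖S u‖ ≤ lam * ‖u‖} :=
        isClosed_le (S.continuous.norm) (continuous_const.mul continuous_norm)
      refine dense_mem_of_isClosed hdenseSet hclosed (fun x hx => ?_) u
      have h1 := hb x hx
      rw [hsum x hx] at h1
      have h2 : ‖S x + S x‖ = 2 * ‖S x‖ := by
        rw [← two_smul ℝ (S x), norm_smul]; norm_num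
      rw [h2] at h1
      have : ‖S x‖ ≤ lam * ‖x‖ := by linarith
      exact this
    · intro mu hco u
      have hclosed : IsClosed {u : H | mu * ‖u‖ ^ 2 ≤ (pInner (S u) u).re} := by
        apply isClosed_le
        · exact (continuous_const.mul (continuous_norm.pow 2))
        · exact Complex.continuous_re.comp (Continuous.inner continuous_id S.continuous)
      refine dense_mem_of_isClosed hdenseSet hclosed (fun x hx => ?_) u
      have h1 := hco x hx
      rw [hsum x hx] at h1
      simp only [Set.mem_setOf_eq, pInner, inner_add_right, Complex.add_re] at h1 ⊢
      linarith
end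
end

section
/- Let (T0, T̃0) be a pair of densely defined linear operators with common dense domain D on a complex Hilbert space H satisfying conditions (T1) and (T2). Then T0 ⊆ T̃0* and T̃0 ⊆ T0*; both T0 and T̃0 are closable, the domains of their closures coincide, and the domains of the adjoints coincide: dom T̃0* = dom T0*. -/
open scoped InnerProductSpace
open Filter Topology LinearPMap

noncomputable section

variable {H : Type*} [NormedAddCommGroup H] [InnerProductSpace ℂ H] [CompleteSpace H]

/-- The bounded operator `T0 + T0t` on the common domain, as a linear map. -/
def pairSum (T0 T0t : H →ₗ.[ℂ] H) (hd : T0.domain = T0t.domain) : T0.domain →ₗ[ℂ] H :=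
  T0.toFun + T0t.toFun.comp (Submodule.inclusion hd.le)

lemma pairSum_apply (T0 T0t : H →ₗ.[ℂ] H) (hd : T0.domain = T0t.domain) (x : T0.domain) :
    pairSum T0 T0t hd x = T0 x + T0t ⟨(x : H), hd.le x.2⟩ := rfl

/-- The bounded extension of `T0 + T0t` to all of `H`. -/
def pairExt (T0 T0t : H →ₗ.[ℂ] H) (hd : T0.domain = T0t.domain) (lam : ℝ)
    (hdense : Dense (T0.domain : Set H))
    (hb : ∀ (x : H) (hx : x ∈ T0.domain),
      ‖T0 ⟨x, hx⟩ + T0t ⟨x, hd.le hx⟩‖ ≤ 2 * lam * ‖x‖) : H →L[ℂ] H :=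
  ((pairSum T0 T0t hd).mkContinuous (2 * lam) fun x => by
      simpa [pairSum_apply] using hb x x.2).extend
    (Submodule.subtypeL T0.domain)

lemma pairExt_apply (T0 T0t : H →ₗ.[ℂ] H) (hd : T0.domain = T0t.domain) (lam : ℝ)
    (hdense : Dense (T0.domain : Set H))
    (hb : ∀ (x : H) (hx : x ∈ T0.domain),
      ‖T0 ⟨x, hx⟩ + T0t ⟨x, hd.le hx⟩‖ ≤ 2 * lam * ‖x‖) (x : T0.domain) :
    pairExt T0 T0t hd lam hdense hb (x : H) = T0 x + T0t ⟨(x : H), hd.le x.2⟩ :=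
  ContinuousLinearMap.extend_eq _ hdense.denseRange_val
    isUniformEmbedding_subtype_val.isUniformInducing _


/-- The adjoint of a densely defined operator is closed. -/
theorem adjoint_isClosed' {T : H →ₗ.[ℂ] H} (hdense : Dense (T.domain : Set H)) :
    T.adjoint.IsClosed := by
  have hgraph : (T.adjoint.graph : Set (H × H)) =
      ⋂ x : T.domain, {p : H × H | ⟪p.2, (x : H)⟫_ℂ = ⟪p.1, T x⟫_ℂ} := by
    ext p
    simp only [Set.mem_iInter, Set.mem_setOf_eq, SetLike.mem_coe, mem_graph_iff]
    constructor
    · rintro ⟨y, hy1, hy2⟩ x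
      rw [← hy1, ← hy2]
      exact adjoint_isFormalAdjoint hdense y x
    · intro h
      have hp1 : p.1 ∈ T.adjoint.domain :=
        mem_adjoint_domain_of_exists p.1 ⟨p.2, fun x => h x⟩
      exact ⟨⟨p.1, hp1⟩, rfl, adjoint_apply_eq hdense ⟨p.1, hp1⟩ fun x => h x⟩
  rw [LinearPMap.IsClosed, hgraph]
  exact isClosed_iInter fun x =>
    isClosed_eq (continuous_snd.inner continuous_const) (continuous_fst.inner continuous_const)

/-- Inclusion of adjoint domains. -/
theorem adjDom_subset (T0 T0t : H →ₗ.[ℂ] H) (hd : T0.domain = T0t.domain) (lam : ℝ)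
    (hdense : Dense (T0.domain : Set H))
    (hb : ∀ (x : H) (hx : x ∈ T0.domain),
      ‖T0 ⟨x, hx⟩ + T0t ⟨x, hd.le hx⟩‖ ≤ 2 * lam * ‖x‖) :
    T0.adjoint.domain ≤ T0t.adjoint.domain := by
  intro y hy
  set A := pairExt T0 T0t hd lam hdense hb with hA
  apply mem_adjoint_domain_of_exists
  refine ⟨ContinuousLinearMap.adjoint A y - T0.adjoint ⟨y, hy⟩, fun x => ?_⟩
  set x0 : T0.domain := ⟨(x : H), hd.ge x.2⟩ with hx0
  have hcoe : (x0 : H) = (x : H) := rfl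
  have h1 : ⟪T0.adjoint ⟨y, hy⟩, (x : H)⟫_ℂ = ⟪y, T0 x0⟫_ℂ :=
    adjoint_isFormalAdjoint hdense ⟨y, hy⟩ x0
  have h2 : ⟪ContinuousLinearMap.adjoint A y, (x : H)⟫_ℂ = ⟪y, A (x : H)⟫_ℂ :=
    ContinuousLinearMap.adjoint_inner_left A (x : H) y
  have h3 : A (x : H) = T0 x0 + T0t x := by
    rw [hA]
    exact pairExt_apply T0 T0t hd lam hdense hb x0
  rw [inner_sub_left, h1, h2, h3, inner_add_right]
  ring

/-- Inclusion of closure domains. -/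
theorem closDom_subset (T0 T0t : H →ₗ.[ℂ] H) (hd : T0.domain = T0t.domain) (lam : ℝ)
    (hdense : Dense (T0.domain : Set H))
    (hb : ∀ (x : H) (hx : x ∈ T0.domain),
      ‖T0 ⟨x, hx⟩ + T0t ⟨x, hd.le hx⟩‖ ≤ 2 * lam * ‖x‖)
    (hc0 : T0.IsClosable) (hc1 : T0t.IsClosable) :
    T0.closure.domain ≤ T0t.closure.domain := by
  intro x hx
  set A := pairExt T0 T0t hd lam hdense hb with hA
  obtain ⟨y, hy⟩ := mem_domain_iff.mp hx
  rw [← hc0.graph_closure_eq_closure_graph] at hy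
  have hy' : ((x, y) : H × H) ∈ closure (T0.graph : Set (H × H)) := by
    rwa [← T0.graph.topologicalClosure_coe, SetLike.mem_coe]
  obtain ⟨g, hg, hgl⟩ := mem_closure_iff_seq_limit.mp hy'
  have ha : ∀ n, ∃ a : T0.domain, ((a : H), T0 a) = g n := fun n => by
    obtain ⟨a, h1, h2⟩ := T0.mem_graph_iff.mp (hg n)
    exact ⟨a, by rw [h1, h2]⟩
  choose a haeq using ha
  have hfst : Tendsto (fun n => ((a n : H))) atTop (𝓝 x) :=
    ((continuous_fst.tendsto _).comp hgl).congr fun n => by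
      simp [Function.comp, ← haeq n]
  have hsnd : Tendsto (fun n => T0 (a n)) atTop (𝓝 y) :=
    ((continuous_snd.tendsto _).comp hgl).congr fun n => by
      simp [Function.comp, ← haeq n]
  have hAt : Tendsto (fun n => A ((a n : H))) atTop (𝓝 (A x)) :=
    (A.continuous.tendsto _).comp hfst
  have hTt : Tendsto (fun n => T0t ⟨(a n : H), hd.le (a n).2⟩) atTop (𝓝 (A x - y)) := by
    have heq : ∀ n, T0t ⟨(a n : H), hd.le (a n).2⟩ = A ((a n : H)) - T0 (a n) := fun n => by
      rw [hA, pairExt_apply T0 T0t hd lam hdense hb (a n), add_sub_cancel_left]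
    simp only [heq]
    exact hAt.sub hsnd
  have hmem : ((x, A x - y) : H × H) ∈ closure (T0t.graph : Set (H × H)) := by
    apply mem_closure_iff_seq_limit.mpr
    refine ⟨fun n => ((a n : H), T0t ⟨(a n : H), hd.le (a n).2⟩), fun n => ?_, hfst.prodMk_nhds hTt⟩
    exact T0t.mem_graph ⟨(a n : H), hd.le (a n).2⟩
  rw [← T0t.graph.topologicalClosure_coe, SetLike.mem_coe,
    hc1.graph_closure_eq_closure_graph] at hmem
  exact mem_domain_of_mem_graph hmem

/-- Theorem 2.3 (i)–(iii): under (T1)–(T2), `T₀ ⊆ T̃₀* =: T₁` and `T̃₀ ⊆ T₀* =: T̃₁`,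
both operators are closable, the domains of the closures coincide, and
`dom T₁ = dom T̃₁`. -/
theorem dualPair_adjoint_extensions
    (T0 T0t : H →ₗ.[ℂ] H) (lam : ℝ) (hP : IsDualPairT12 T0 T0t lam) :
    T0 ≤ T0t.adjoint ∧ T0t ≤ T0.adjoint ∧
    T0.IsClosable ∧ T0t.IsClosable ∧
    T0.closure.domain = T0t.closure.domain ∧
    T0t.adjoint.domain = T0.adjoint.domain := by
  obtain ⟨hd, hdense, hsym, hlam, hb⟩ := hP
  have hdenset : Dense (T0t.domain : Set H) := by rw [← hd]; exact hdense
  have hfa : T0t.IsFormalAdjoint T0 := fun ψ φ => (hsym φ ψ).symm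
  have h1 : T0 ≤ T0t.adjoint := hfa.le_adjoint hdenset
  have h2 : T0t ≤ T0.adjoint := hfa.symm.le_adjoint hdense
  have hc0 : T0.IsClosable := ((adjoint_isClosed' hdenset).isClosable).leIsClosable h1
  have hc1 : T0t.IsClosable := ((adjoint_isClosed' hdense).isClosable).leIsClosable h2
  have hb' : ∀ (x : H) (hx : x ∈ T0t.domain),
      ‖T0t ⟨x, hx⟩ + T0 ⟨x, hd.symm.le hx⟩‖ ≤ 2 * lam * ‖x‖ := fun x hx => by
    rw [add_comm]; exact hb x (hd.ge hx)
  exact ⟨h1, h2, hc0, hc1,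
    le_antisymm (closDom_subset T0 T0t hd lam hdense hb hc0 hc1)
      (closDom_subset T0t T0 hd.symm lam hdenset hb' hc1 hc0),
    le_antisymm (adjDom_subset T0t T0 hd.symm lam hdenset hb')
      (adjDom_subset T0 T0t hd lam hdense hb)⟩
end
end
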